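/- Define Q_1 = 75 + 12cos θ + 3cos²θ + 48cos φ − 18cos²φ − 3sin²θ + 24 sin θ sin φ + 18 sin²φ and Q_2 = 46 + 6cos²θ − 16 cos θ cos φ − 36 cos²φ − 6 sin²θ + 32 sin θ sin φ + 36 sin²φ. Then there exist angles θ, φ (e.g., θ ≈ 3.916, φ ≈ 3.002) for which simultaneously Q_1 < 0 and Q_2 < 0; in particular min over θ,φ of Q_1 is ≤ −0.68 and of Q_2 is ≤ −2.9 at a common point. -/

import Mathlib

open scoped BigOperators

noncomputable section

/-- The Bell value of the Dicke states `|D_{1,3}^4⟩` as a function of the device angles. -/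
def Q1 (θ φ : ℝ) : ℝ :=
  75 + 12 * Real.cos θ + 3 * Real.cos θ ^ 2 + 48 * Real.cos φ - 18 * Real.cos φ ^ 2
    - 3 * Real.sin θ ^ 2 + 24 * Real.sin θ * Real.sin φ + 18 * Real.sin φ ^ 2

/-- The Bell value of the Dicke state `|D_2^4⟩` as a function of the device angles. -/
def Q2 (θ φ : ℝ) : ℝ :=
  46 + 6 * Real.cos θ ^ 2 - 16 * Real.cos θ * Real.cos φ - 36 * Real.cos φ ^ 2
    - 6 * Real.sin θ ^ 2 + 32 * Real.sin θ * Real.sin φ + 36 * Real.sin φ ^ 2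

lemma cos_two_arctan (x : ℝ) : Real.cos (2 * Real.arctan x) = (1 - x ^ 2) / (1 + x ^ 2) := by
  have hpos : (0:ℝ) < 1 + x ^ 2 := by positivity
  have hs : Real.sqrt (1 + x ^ 2) ^ 2 = 1 + x ^ 2 := Real.sq_sqrt hpos.le
  rw [Real.cos_two_mul, Real.cos_arctan]
  rw [div_pow, one_pow, hs]
  field_simp
  ring

lemma sin_two_arctan (x : ℝ) : Real.sin (2 * Real.arctan x) = 2 * x / (1 + x ^ 2) := by
  have hpos : (0:ℝ) < 1 + x ^ 2 := by positivity
  have hs : Real.sqrt (1 + x ^ 2) * Real.sqrt (1 + x ^ 2) = 1 + x ^ 2 :=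
    Real.mul_self_sqrt hpos.le
  rw [Real.sin_two_mul, Real.sin_arctan, Real.cos_arctan]
  field_simp
  rw [Real.sq_sqrt hpos.le]

/-- There exist device angles `θ, φ` for which both `Q1` and `Q2` are
simultaneously negative; in particular at a common point `Q1 ≤ -0.68` and `Q2 ≤ -2.9`. -/
theorem stmt14 :
    ∃ θ φ : ℝ, Q1 θ φ < 0 ∧ Q2 θ φ < 0 ∧ Q1 θ φ ≤ -0.68 ∧ Q2 θ φ ≤ -2.9 := by
  refine ⟨2 * Real.arctan (-2453/1000), 2 * Real.arctan (1429/100), ?_, ?_, ?_, ?_⟩ <;>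
    simp only [Q1, Q2, cos_two_arctan, sin_two_arctan] <;> norm_num
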